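/- Let a < b and α₁, β₁ ∈ [a,b] with α₁ < β₁. Define p(t) = t - α₁ for t ∈ [a,(a+b)/2] and p(t) = t - β₁ for t ∈ ((a+b)/2, b]. Then ∫_a^b |p(t)| dt = [(α₁-a)² + (b-β₁)²]/2 + [(a+b-2α₁)² + (a+b-2β₁)²]/8, provided α₁ ≤ (a+b)/2 ≤ β₁. -/

import Mathlib

open Set intervalIntegral
open scoped Interval

lemma int_lin (c d e : ℝ) : (∫ t in c..d, (t - e)) = ((d - e) ^ 2 - (c - e) ^ 2) / 2 := by
  rw [intervalIntegral.integral_comp_sub_right (fun t => t) e, integral_id]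

lemma int_lin' (c d e : ℝ) : (∫ t in c..d, (e - t)) = ((c - e) ^ 2 - (d - e) ^ 2) / 2 := by
  have : (∫ t in c..d, (e - t)) = ∫ t in c..d, -(t - e) := by
    congr 1; ext t; ring
  rw [this, intervalIntegral.integral_neg, int_lin]
  ring

theorem kernel_L1_norm (a b α₁ β₁ : ℝ) (hab : a < b)
    (hα : a ≤ α₁) (hαm : α₁ ≤ (a + b) / 2) (hmβ : (a + b) / 2 ≤ β₁) (hβ : β₁ ≤ b)
    (hαβ : α₁ < β₁)
    (p : ℝ → ℝ) (hp : ∀ t, p t = if t ≤ (a + b) / 2 then t - α₁ else t - β₁) :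
    (∫ t in a..b, |p t|) =
      ((α₁ - a) ^ 2 + (b - β₁) ^ 2) / 2 +
        ((a + b - 2 * α₁) ^ 2 + (a + b - 2 * β₁) ^ 2) / 8 := by
  set m := (a + b) / 2 with hm
  -- pointwise equalities on the four (open-closed) subintervals
  have e1 : ∀ t ∈ Ι a α₁, |p t| = α₁ - t := by
    intro t ht
    rw [uIoc_of_le hα] at ht
    rw [hp t, if_pos (le_trans ht.2 hαm), abs_of_nonpos (by linarith [ht.2])]
    ring
  have e2 : ∀ t ∈ Ι α₁ m, |p t| = t - α₁ := by
    intro t ht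
    rw [uIoc_of_le hαm] at ht
    rw [hp t, if_pos ht.2, abs_of_nonneg (by linarith [ht.1])]
  have e3 : ∀ t ∈ Ι m β₁, |p t| = β₁ - t := by
    intro t ht
    rw [uIoc_of_le hmβ] at ht
    rw [hp t, if_neg (by push_neg; exact ht.1), abs_of_nonpos (by linarith [ht.2])]
    ring
  have e4 : ∀ t ∈ Ι β₁ b, |p t| = t - β₁ := by
    intro t ht
    rw [uIoc_of_le hβ] at ht
    rw [hp t, if_neg (by push_neg; linarith [ht.1]), abs_of_nonneg (by linarith [ht.1])]
  -- integrability on the four subintervals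
  have ae_of_eqOn : ∀ (c d : ℝ) (g : ℝ → ℝ), (∀ t ∈ Ι c d, |p t| = g t) →
      IntervalIntegrable g MeasureTheory.volume c d →
      IntervalIntegrable (fun t => |p t|) MeasureTheory.volume c d := by
    intro c d g heq hg
    refine hg.congr_ae ?_
    refine (MeasureTheory.ae_restrict_iff' measurableSet_uIoc).2 ?_
    filter_upwards with t ht
    exact (heq t ht).symm
  have i1 := ae_of_eqOn a α₁ _ e1 ((continuous_const.sub continuous_id).intervalIntegrable _ _)
  have i2 := ae_of_eqOn α₁ m _ e2 ((continuous_id.sub continuous_const).intervalIntegrable _ _)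
  have i3 := ae_of_eqOn m β₁ _ e3 ((continuous_const.sub continuous_id).intervalIntegrable _ _)
  have i4 := ae_of_eqOn β₁ b _ e4 ((continuous_id.sub continuous_const).intervalIntegrable _ _)
  have h34 := integral_add_adjacent_intervals i3 i4
  have h234 := integral_add_adjacent_intervals i2 (i3.trans i4)
  have h1234 := integral_add_adjacent_intervals i1 (i2.trans (i3.trans i4))
  -- values on the four subintervals
  have v1 : (∫ t in a..α₁, |p t|) = ((a - α₁) ^ 2 - (α₁ - α₁) ^ 2) / 2 := by
    rw [intervalIntegral.integral_congr_ae
      (MeasureTheory.ae_of_all _ fun t ht => e1 t ht), int_lin']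
  have v2 : (∫ t in α₁..m, |p t|) = ((m - α₁) ^ 2 - (α₁ - α₁) ^ 2) / 2 := by
    rw [intervalIntegral.integral_congr_ae
      (MeasureTheory.ae_of_all _ fun t ht => e2 t ht), int_lin]
  have v3 : (∫ t in m..β₁, |p t|) = ((m - β₁) ^ 2 - (β₁ - β₁) ^ 2) / 2 := by
    rw [intervalIntegral.integral_congr_ae
      (MeasureTheory.ae_of_all _ fun t ht => e3 t ht), int_lin']
  have v4 : (∫ t in β₁..b, |p t|) = ((b - β₁) ^ 2 - (β₁ - β₁) ^ 2) / 2 := by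
    rw [intervalIntegral.integral_congr_ae
      (MeasureTheory.ae_of_all _ fun t ht => e4 t ht), int_lin]
  have hmv : m = (a + b) / 2 := hm
  rw [← h1234, ← h234, ← h34, v1, v2, v3, v4, hmv]
  ring
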